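/- Let n and t be positive integers with t ≥ 2, t dividing n and t² ≤ n. Then (n − t + 1)/t ∈ ℒ_{n−t+1}(n+1), and moreover (n − t + 1) · (t/(n − t + 1)) = (n+1) − (n − t + 1). -/

import Mathlib

open Finset

/-- The set `ℒ_r(α)`: the smallest set of reals containing `α - 1` and closed under the rule:
for `1 ≤ s ≤ r - 1` and `q₁, …, q_s ∈ ℒ_r(α)`, if `β := α − 1 − s − ∑ qᵢ⁻¹ > 0`
then `β ∈ ℒ_r(α)`. -/
inductive LSet (r : ℕ) (α : ℝ) : ℝ → Prop
  | base : LSet r α (α - 1)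
  | step (s : ℕ) (hs1 : 1 ≤ s) (hsr : s ≤ r - 1) (q : Fin s → ℝ)
      (hmem : ∀ i, LSet r α (q i))
      (hpos : 0 < α - 1 - (s : ℝ) - ∑ i, (q i)⁻¹) :
      LSet r α (α - 1 - (s : ℝ) - ∑ i, (q i)⁻¹)

theorem stmt_13 (n t : ℕ) (ht : 2 ≤ t) (hdvd : t ∣ n) (ht2 : t ^ 2 ≤ n) :
    LSet (n - t + 1) ((n : ℝ) + 1) (((n : ℝ) - (t : ℝ) + 1) / (t : ℝ)) ∧
      ((n : ℝ) - (t : ℝ) + 1) * ((t : ℝ) / ((n : ℝ) - (t : ℝ) + 1)) =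
        ((n : ℝ) + 1) - ((n : ℝ) - (t : ℝ) + 1) := by
  obtain ⟨m, hm⟩ := hdvd
  have ht0 : 0 < t := by omega
  have hmt : t ≤ m := by nlinarith
  have htn : t ≤ n := by nlinarith
  have hmn : m ≤ n := by nlinarith
  have hmln : m < n := by nlinarith
  have hn0 : 0 < n := by omega
  have htR : (0:ℝ) < t := by exact_mod_cast ht0
  have hnR : (0:ℝ) < n := by exact_mod_cast hn0
  have hnum : (0:ℝ) < (n:ℝ) - t + 1 := by
    have : (t:ℝ) ≤ n := by exact_mod_cast htn
    linarith
  constructor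
  · have key : ((n : ℝ) - (t : ℝ) + 1) / (t : ℝ) =
        ((n:ℝ) + 1) - 1 - ((n - m : ℕ):ℝ) -
          ∑ _i : Fin (n - m), ((n:ℝ))⁻¹ := by
      rw [Finset.sum_const, Finset.card_univ, Fintype.card_fin]
      rw [Nat.cast_sub hmn]
      have hmR : (n:ℝ) = t * m := by exact_mod_cast hm
      rw [nsmul_eq_mul, Nat.cast_sub hmn]
      field_simp
      nlinarith [hm, hmR, mul_pos htR hnR]
    rw [key]
    refine LSet.step (n - m) (by omega) (by omega) (fun _ => (n:ℝ)) (fun i => ?_) ?_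
    · simpa using LSet.base (r := n - t + 1) (α := (n:ℝ) + 1)
    · rw [← key]; positivity
  · field_simp
    ring
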